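/- Let d ≥ 1, let x̂ : ℝ × ℝ^d → ℝ^d and ψ : ℝ^d → ℝ be continuously differentiable, let x_0 ∈ ℝ^d, let U be an open neighborhood of x_0, and let t_s : U → ℝ be differentiable with ψ(x̂(t_s(z), z)) = 0 for all z ∈ U. Write t* = t_s(x_0), v = ∂_t x̂(t*, x_0) ∈ ℝ^d, X = ∂_{x_0} x̂(t*, x_0) ∈ ℝ^{d×d}, and n = ∇ψ(x̂(t*, x_0)) ∈ ℝ^d, and assume n^T v ≠ 0. Define y_0 : U → ℝ^d by y_0(z) = x̂(t_s(z), z). Then y_0 is differentiable at x_0 with Jacobian ∂ y_0(x_0) = ( I − v n^T / (n^T v) ) X. -/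

import Mathlib

/-- Jacobian of the state at the switching time: with `y₀(z) = x̂(t_s(z), z)`,
`v = ∂_t x̂(t*, x₀)`, `X = ∂_{x₀} x̂(t*, x₀)` and `n = ∇ψ(x̂(t*, x₀))`, and assuming
`n^T v ≠ 0` and `ψ(x̂(t_s(z), z)) = 0` on a neighborhood of `x₀`, the map `y₀` is
differentiable at `x₀` with Jacobian `(I - v n^T/(n^T v)) X`. -/
theorem stmt13 (d : ℕ) (hd : 0 < d)
    (xh : ℝ × (Fin d → ℝ) → (Fin d → ℝ)) (ψ : (Fin d → ℝ) → ℝ)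
    (hxh : ContDiff ℝ 1 xh) (hψ : ContDiff ℝ 1 ψ)
    (x0 : Fin d → ℝ) (U : Set (Fin d → ℝ)) (hU : IsOpen U) (hx0 : x0 ∈ U)
    (ts : (Fin d → ℝ) → ℝ) (hts : DifferentiableOn ℝ ts U)
    (hswitch : ∀ z ∈ U, ψ (xh (ts z, z)) = 0)
    (htrans : fderiv ℝ ψ (xh (ts x0, x0)) (deriv (fun t => xh (t, x0)) (ts x0)) ≠ 0) :
    DifferentiableAt ℝ (fun z => xh (ts z, z)) x0 ∧
    ∀ u : Fin d → ℝ,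
      fderiv ℝ (fun z => xh (ts z, z)) x0 u =
        fderiv ℝ (fun z => xh (ts x0, z)) x0 u -
          (fderiv ℝ ψ (xh (ts x0, x0)) (fderiv ℝ (fun z => xh (ts x0, z)) x0 u) /
            fderiv ℝ ψ (xh (ts x0, x0)) (deriv (fun t => xh (t, x0)) (ts x0))) •
            deriv (fun t => xh (t, x0)) (ts x0) := by
  set p : ℝ × (Fin d → ℝ) := (ts x0, x0) with hp
  have hxd : DifferentiableAt ℝ xh p := (hxh.differentiable one_ne_zero) p
  set D := fderiv ℝ xh p with hD
  have hts' : DifferentiableAt ℝ ts x0 :=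
    (hts x0 hx0).differentiableAt (hU.mem_nhds hx0)
  -- derivative of z ↦ (ts z, z)
  have hF : HasFDerivAt (fun z : Fin d → ℝ => (ts z, z))
      ((fderiv ℝ ts x0).prod (ContinuousLinearMap.id ℝ _)) x0 :=
    HasFDerivAt.prodMk (hts'.hasFDerivAt) (hasFDerivAt_id x0)
  -- differentiability of y₀
  have hxd1 : HasFDerivAt xh D ((fun z : Fin d → ℝ => (ts z, z)) x0) := hxd.hasFDerivAt
  have hy : HasFDerivAt (fun z => xh (ts z, z))
      (D.comp ((fderiv ℝ ts x0).prod (ContinuousLinearMap.id ℝ _))) x0 :=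
    by have h := HasFDerivAt.comp (f := fun z => (ts z, z)) x0 hxd1 hF; exact h
  have hydiff : DifferentiableAt ℝ (fun z => xh (ts z, z)) x0 := hy.differentiableAt
  -- v = deriv (fun t => xh (t, x0)) (ts x0) = D (1, 0)
  have hv : HasDerivAt (fun t => xh (t, x0)) (D (1, 0)) (ts x0) := by
    have h1 : HasFDerivAt (fun t : ℝ => (t, x0))
        ((ContinuousLinearMap.id ℝ ℝ).prod 0) (ts x0) :=
      HasFDerivAt.prodMk (hasFDerivAt_id _) (hasFDerivAt_const _ _)
    have hxd2 : HasFDerivAt xh D ((fun t : ℝ => (t, x0)) (ts x0)) := hxd.hasFDerivAt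
    have h := HasFDerivAt.comp (f := fun t : ℝ => (t, x0)) (ts x0) hxd2 h1
    have := h.hasDerivAt
    simpa [Function.comp_def] using this
  have hvderiv : deriv (fun t => xh (t, x0)) (ts x0) = D (1, 0) := hv.deriv
  -- X u = D (0, u)
  have hX : HasFDerivAt (fun z => xh (ts x0, z))
      (D.comp ((0 : (Fin d → ℝ) →L[ℝ] ℝ).prod (ContinuousLinearMap.id ℝ _))) x0 := by
    have h1 : HasFDerivAt (fun z : Fin d → ℝ => ((ts x0), z))
        ((0 : (Fin d → ℝ) →L[ℝ] ℝ).prod (ContinuousLinearMap.id ℝ _)) x0 :=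
      HasFDerivAt.prodMk (hasFDerivAt_const _ _) (hasFDerivAt_id x0)
    have hxd3 : HasFDerivAt xh D ((fun z : Fin d → ℝ => ((ts x0), z)) x0) := hxd.hasFDerivAt
    have h := HasFDerivAt.comp (f := fun z : Fin d → ℝ => ((ts x0), z)) x0 hxd3 h1
    exact h
  have hXfd : ∀ u, fderiv ℝ (fun z => xh (ts x0, z)) x0 u = D (0, u) := by
    intro u; rw [hX.fderiv]; simp
  -- y₀' u = (ts' u) • D(1,0) + D(0,u)
  have hyfd : ∀ u, fderiv ℝ (fun z => xh (ts z, z)) x0 u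
      = (fderiv ℝ ts x0 u) • D (1, 0) + D (0, u) := by
    intro u
    rw [hy.fderiv]
    have : ((fderiv ℝ ts x0).prod (ContinuousLinearMap.id ℝ _)) u
        = (fderiv ℝ ts x0 u, u) := rfl
    have h2 : ((fderiv ℝ ts x0 u, u) : ℝ × (Fin d → ℝ))
        = (fderiv ℝ ts x0 u) • ((1 : ℝ), (0 : Fin d → ℝ)) + (0, u) := by
      simp [Prod.ext_iff]
    simp only [ContinuousLinearMap.comp_apply, this, h2, map_add, map_smul]
  -- ψ ∘ y₀ is locally 0
  set n := fderiv ℝ ψ (xh p) with hn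
  have hψd : DifferentiableAt ℝ ψ (xh p) := (hψ.differentiable one_ne_zero) _
  have hzero : fderiv ℝ (fun z => ψ (xh (ts z, z))) x0 = 0 := by
    have heq : (fun z => ψ (xh (ts z, z))) =ᶠ[nhds x0] fun _ => (0 : ℝ) :=
      Filter.eventually_of_mem (hU.mem_nhds hx0) hswitch
    rw [heq.fderiv_eq]; simp
  have hchain : fderiv ℝ (fun z => ψ (xh (ts z, z))) x0
      = n.comp (fderiv ℝ (fun z => xh (ts z, z)) x0) :=
    fderiv_comp x0 hψd hydiff
  have hkey : ∀ u, (fderiv ℝ ts x0 u) * n (D (1, 0)) + n (D (0, u)) = 0 := by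
    intro u
    have := congrArg (fun L : (Fin d → ℝ) →L[ℝ] ℝ => L u) (hzero.symm.trans hchain)
    simp only [ContinuousLinearMap.zero_apply, ContinuousLinearMap.comp_apply] at this
    rw [hyfd u] at this
    simpa [mul_comm] using this.symm
  refine ⟨hydiff, fun u => ?_⟩
  rw [hyfd u, hXfd u, hvderiv]
  have hnv : n (D (1, 0)) ≠ 0 := by rwa [hvderiv] at htrans
  have ha : fderiv ℝ ts x0 u = -(n (D (0, u)) / n (D (1, 0))) := by
    field_simp
    linarith [hkey u]
  rw [ha]
  module
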